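/- Let GL(3,ℂ) × GL(2,ℂ) act on V = Sym²(ℂ³) ⊗ ℂ² via (g,h)·(A ⊗ v) = (gAgᵀ) ⊗ (hv) (i.e., the representation 2ϖ₁ ⊠ ϖ₁). Then the ring of SL(3,ℂ) × SL(2,ℂ)-invariant polynomials on V contains a nonzero homogeneous invariant of degree 12: namely, identifying V with pairs (A,B) of symmetric 3×3 matrices, the discriminant of the binary cubic f(x,y) = det(xA + yB) is such an invariant. -/

import Mathlib

open Polynomial Matrix

section Aux
variable {R S : Type*} [CommRing R] [CommRing S]

noncomputable def Dmix (A B : Matrix (Fin 3) (Fin 3) R) : R :=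
  (Matrix.of ![B 0, A 1, A 2]).det + (Matrix.of ![A 0, B 1, A 2]).det +
    (Matrix.of ![A 0, A 1, B 2]).det

lemma key (A B : Matrix (Fin 3) (Fin 3) R) (u v : R) :
    (u • A + v • B).det =
      u ^ 3 * A.det + u ^ 2 * v * Dmix A B + u * v ^ 2 * Dmix B A + v ^ 3 * B.det := by
  simp [Dmix, det_fin_three, Matrix.add_apply, Matrix.smul_apply, smul_eq_mul]
  ring

lemma Dmix_map (f : R →+* S) (A B : Matrix (Fin 3) (Fin 3) R) :
    Dmix (A.map f) (B.map f) = f (Dmix A B) := by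
  simp [Dmix, det_fin_three, Matrix.map_apply, _root_.map_add, _root_.map_mul, _root_.map_sub]

lemma det_map' (f : R →+* S) (A : Matrix (Fin 3) (Fin 3) R) :
    (A.map f).det = f A.det := by
  simp [det_fin_three, Matrix.map_apply, _root_.map_add, _root_.map_mul, _root_.map_sub]

lemma Dmix_smul (t : R) (A B : Matrix (Fin 3) (Fin 3) R) :
    Dmix (t • A) (t • B) = t ^ 3 * Dmix A B := by
  simp [Dmix, det_fin_three, Matrix.smul_apply, smul_eq_mul]
  ring

lemma Dmix_comb (a b c d : R) (A B : Matrix (Fin 3) (Fin 3) R) :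
    Dmix (a • A + c • B) (b • A + d • B) =
      3*a^2*b*A.det + (2*a*b*c + a^2*d)*Dmix A B + (b*c^2 + 2*a*c*d)*Dmix B A +
        3*c^2*d*B.det := by
  simp [Dmix, det_fin_three, Matrix.add_apply, Matrix.smul_apply, smul_eq_mul]
  ring

end Aux

noncomputable def detCubic (A B : Matrix (Fin 3) (Fin 3) ℂ) : Polynomial ℂ :=
  ((Polynomial.X : Polynomial ℂ) • A.map Polynomial.C + B.map Polynomial.C).det

lemma detCubic_eq (A B : Matrix (Fin 3) (Fin 3) ℂ) :
    detCubic A B = C B.det + C (Dmix B A) * X + C (Dmix A B) * X ^ 2 + C A.det * X ^ 3 := by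
  have h : (B.map (Polynomial.C (R := ℂ))) = (1 : Polynomial ℂ) • B.map Polynomial.C := by
    simp
  rw [detCubic, h, key, _root_.det_map', _root_.det_map', Dmix_map, Dmix_map]
  ring

noncomputable def discCubic (p : Polynomial ℂ) : ℂ :=
  p.coeff 2 ^ 2 * p.coeff 1 ^ 2 - 4 * p.coeff 3 * p.coeff 1 ^ 3 -
    4 * p.coeff 2 ^ 3 * p.coeff 0 - 27 * p.coeff 3 ^ 2 * p.coeff 0 ^ 2 +
    18 * p.coeff 3 * p.coeff 2 * p.coeff 1 * p.coeff 0

noncomputable def discDet (A B : Matrix (Fin 3) (Fin 3) ℂ) : ℂ :=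
  discCubic (detCubic A B)

lemma discDet_formula (A B : Matrix (Fin 3) (Fin 3) ℂ) :
    discDet A B = (Dmix A B) ^ 2 * (Dmix B A) ^ 2 - 4 * A.det * (Dmix B A) ^ 3 -
      4 * (Dmix A B) ^ 3 * B.det - 27 * A.det ^ 2 * B.det ^ 2 +
      18 * A.det * (Dmix A B) * (Dmix B A) * B.det := by
  have h3 : (detCubic A B).coeff 3 = A.det := by
    rw [detCubic_eq]; simp [coeff_add, coeff_C_mul, coeff_X_pow, coeff_C]
  have h2 : (detCubic A B).coeff 2 = Dmix A B := by
    rw [detCubic_eq]; simp [coeff_add, coeff_C_mul, coeff_X_pow, coeff_C]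
  have h1 : (detCubic A B).coeff 1 = Dmix B A := by
    rw [detCubic_eq]; simp [coeff_add, coeff_C_mul, coeff_X_pow, coeff_C]
  have h0 : (detCubic A B).coeff 0 = B.det := by
    rw [detCubic_eq]; simp [coeff_add, coeff_C_mul, coeff_X_pow, coeff_C]
  rw [discDet, discCubic, h3, h2, h1, h0]

lemma disc_id (a b c d p3 p2 p1 p0 : ℂ) :
    (3*a^2*b*p3 + (2*a*b*c + a^2*d)*p2 + (b*c^2 + 2*a*c*d)*p1 + 3*c^2*d*p0) ^ 2 *
      (3*a*b^2*p3 + (b^2*c + 2*a*b*d)*p2 + (2*b*c*d + a*d^2)*p1 + 3*c*d^2*p0) ^ 2 -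
    4 * (a^3*p3 + a^2*c*p2 + a*c^2*p1 + c^3*p0) *
      (3*a*b^2*p3 + (b^2*c + 2*a*b*d)*p2 + (2*b*c*d + a*d^2)*p1 + 3*c*d^2*p0) ^ 3 -
    4 * (3*a^2*b*p3 + (2*a*b*c + a^2*d)*p2 + (b*c^2 + 2*a*c*d)*p1 + 3*c^2*d*p0) ^ 3 *
      (b^3*p3 + b^2*d*p2 + b*d^2*p1 + d^3*p0) -
    27 * (a^3*p3 + a^2*c*p2 + a*c^2*p1 + c^3*p0) ^ 2 *
      (b^3*p3 + b^2*d*p2 + b*d^2*p1 + d^3*p0) ^ 2 +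
    18 * (a^3*p3 + a^2*c*p2 + a*c^2*p1 + c^3*p0) *
      (3*a^2*b*p3 + (2*a*b*c + a^2*d)*p2 + (b*c^2 + 2*a*c*d)*p1 + 3*c^2*d*p0) *
      (3*a*b^2*p3 + (b^2*c + 2*a*b*d)*p2 + (2*b*c*d + a*d^2)*p1 + 3*c*d^2*p0) *
      (b^3*p3 + b^2*d*p2 + b*d^2*p1 + d^3*p0)
    = (a*d - b*c)^6 *
      (p2^2*p1^2 - 4*p3*p1^3 - 4*p2^3*p0 - 27*p3^2*p0^2 + 18*p3*p2*p1*p0) := by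
  ring

/-- On pairs `(A,B)` of symmetric `3×3` complex matrices (identified with
`Sym²(ℂ³) ⊗ ℂ²`), the discriminant of the binary cubic `det(xA+yB)` is a nonzero
homogeneous degree-12 invariant for the action of `SL(3,ℂ) × SL(2,ℂ)` given by
`A ↦ gAgᵀ` and by linear substitution in `(x,y)`. -/
theorem stmt9 :
    (∀ (t : ℂ) (A B : Matrix (Fin 3) (Fin 3) ℂ),
      discDet (t • A) (t • B) = t ^ 12 * discDet A B) ∧
    (∀ (g : Matrix.SpecialLinearGroup (Fin 3) ℂ) (A B : Matrix (Fin 3) (Fin 3) ℂ),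
      A.IsSymm → B.IsSymm →
        discDet (g.1 * A * g.1ᵀ) (g.1 * B * g.1ᵀ) = discDet A B) ∧
    (∀ (h : Matrix.SpecialLinearGroup (Fin 2) ℂ) (A B : Matrix (Fin 3) (Fin 3) ℂ),
      A.IsSymm → B.IsSymm →
        discDet (h.1 0 0 • A + h.1 1 0 • B) (h.1 0 1 • A + h.1 1 1 • B) = discDet A B) ∧
    (∃ A B : Matrix (Fin 3) (Fin 3) ℂ, A.IsSymm ∧ B.IsSymm ∧ discDet A B ≠ 0) := by
  refine ⟨?_, ?_, ?_, ?_⟩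
  · intro t A B
    have hA : (t • A).det = t ^ 3 * A.det := by
      rw [Matrix.det_smul]; norm_num
    have hB : (t • B).det = t ^ 3 * B.det := by
      rw [Matrix.det_smul]; norm_num
    rw [discDet_formula, discDet_formula, hA, hB, Dmix_smul, Dmix_smul]
    ring
  · intro g A B _ _
    have hdet : ((g.1).map (C : ℂ →+* Polynomial ℂ)).det = 1 := by
      rw [_root_.det_map', g.2]; simp
    have hmap : ∀ M : Matrix (Fin 3) (Fin 3) ℂ,
        (g.1 * M * g.1ᵀ).map (C : ℂ →+* Polynomial ℂ) =
          g.1.map C * M.map C * (g.1.map C)ᵀ := by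
      intro M
      rw [Matrix.map_mul, Matrix.map_mul, Matrix.transpose_map]
    have hcubic : detCubic (g.1 * A * g.1ᵀ) (g.1 * B * g.1ᵀ) = detCubic A B := by
      rw [detCubic, detCubic, hmap, hmap]
      have : (X : Polynomial ℂ) • (g.1.map C * A.map C * (g.1.map C)ᵀ) +
          g.1.map C * B.map C * (g.1.map C)ᵀ =
          g.1.map C * ((X : Polynomial ℂ) • A.map C + B.map C) * (g.1.map C)ᵀ := by
        rw [Matrix.mul_add, Matrix.add_mul, Matrix.mul_smul, Matrix.smul_mul]
      rw [this, Matrix.det_mul, Matrix.det_mul, Matrix.det_transpose, hdet]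
      ring
    rw [discDet, discDet, hcubic]
  · intro h A B _ _
    set a := h.1 0 0 with ha
    set b := h.1 0 1 with hb
    set c := h.1 1 0 with hc
    set d := h.1 1 1 with hd
    have e : a * d - b * c = 1 := by
      have := h.2
      rw [Matrix.det_fin_two] at this
      exact this
    have hdA : (a • A + c • B).det =
        a^3 * A.det + a^2*c * Dmix A B + a*c^2 * Dmix B A + c^3 * B.det := key A B a c
    have hdB : (b • A + d • B).det =
        b^3 * A.det + b^2*d * Dmix A B + b*d^2 * Dmix B A + d^3 * B.det := key A B b d
    rw [discDet_formula, discDet_formula, hdA, hdB, Dmix_comb, Dmix_comb]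
    have hid := disc_id a b c d A.det (Dmix A B) (Dmix B A) B.det
    rw [e, one_pow, one_mul] at hid
    linear_combination hid
  · refine ⟨Matrix.of ![![1,0,0],![0,1,0],![0,0,1]],
      Matrix.of ![![0,0,0],![0,1,0],![0,0,2]], ?_, ?_, ?_⟩
    · show _ = _; ext i j; fin_cases i <;> fin_cases j <;> rfl
    · show _ = _; ext i j; fin_cases i <;> fin_cases j <;> rfl
    · rw [discDet_formula]
      simp only [Dmix, det_fin_three, Matrix.of_apply, Matrix.cons_val_zero, Matrix.cons_val_one,
        Matrix.cons_val_two, Matrix.head_cons, Matrix.tail_cons]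
      norm_num
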